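/- Let F be a field and let g_i(x_i) = ∏_{s ∈ S_i}(x_i − s) for nonempty finite subsets S_i ⊆ F, 1 ≤ i ≤ n. A polynomial f ∈ F[x_1,...,x_n] lies in the ideal ⟨g_1,...,g_n⟩ if and only if f vanishes on every point of S_1 × S_2 × ⋯ × S_n. -/

import Mathlib

open MvPolynomial

private lemma hard_dir (F : Type*) [Field F] :
    ∀ (n : ℕ) (S : Fin n → Finset F) (f : MvPolynomial (Fin n) F),
      (∀ α : Fin n → F, (∀ i, α i ∈ S i) → eval α f = 0) →
      f ∈ Ideal.span
        (Set.range fun i : Fin n => ∏ s ∈ S i, ((X i : MvPolynomial (Fin n) F) - C s)) := by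
  intro n
  induction n with
  | zero =>
    intro S f hf
    obtain ⟨a, rfl⟩ := MvPolynomial.C_surjective (Fin 0) f
    have := hf Fin.elim0 (fun i => i.elim0)
    simp only [eval_C] at this
    simp [this]
  | succ n ih =>
    intro S f hf
    classical
    set φ := MvPolynomial.finSuccEquiv F n with hφ
    set I : Ideal (MvPolynomial (Fin (n + 1)) F) :=
      Ideal.span (Set.range fun i : Fin (n + 1) =>
        ∏ s ∈ S i, ((X i : MvPolynomial (Fin (n + 1)) F) - C s)) with hI
    set g0 : Polynomial (MvPolynomial (Fin n) F) :=
      ∏ s ∈ S 0, (Polynomial.X - Polynomial.C (C s)) with hg0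
    have hg0monic : g0.Monic :=
      Polynomial.monic_prod_of_monic _ _ fun s _ => Polynomial.monic_X_sub_C _
    have hg0deg : g0.natDegree = (S 0).card := by
      rw [hg0, Polynomial.natDegree_prod]
      · simp [Polynomial.natDegree_X_sub_C]
      · intro s _
        exact Polynomial.X_sub_C_ne_zero _
    set r := φ f %ₘ g0 with hr
    set q := φ f /ₘ g0 with hq
    have hfr : φ f = r + g0 * q := (Polynomial.modByMonic_add_div (φ f) g0).symm
    -- the generator for index 0 maps to g0
    have hφg0 : φ (∏ s ∈ S 0, ((X 0 : MvPolynomial (Fin (n + 1)) F) - C s)) = g0 := by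
      rw [map_prod]
      refine Finset.prod_congr rfl fun s _ => ?_
      rw [map_sub, MvPolynomial.finSuccEquiv_X_zero]
      congr 1
      simp [hφ, MvPolynomial.finSuccEquiv_apply]
    -- r's images under eval on the grid vanish
    have hr0 : ∀ α' : Fin n → F, (∀ i, α' i ∈ S i.succ) → Polynomial.map (eval α') r = 0 := by
      intro α' hα'
      by_cases hrz : r = 0
      · simp [hrz]
      refine Polynomial.eq_zero_of_natDegree_lt_card_of_eval_eq_zero' _ (S 0) ?_ ?_
      · intro s hs
        have hv : eval (Fin.cons s α' : Fin (n + 1) → F) f = 0 := by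
          refine hf _ fun i => ?_
          refine Fin.cases ?_ ?_ i
          · simpa using hs
          · intro j; simpa using hα' j
        rw [MvPolynomial.eval_eq_eval_mv_eval'] at hv
        have hg0eval : Polynomial.eval s (Polynomial.map (eval α') g0) = 0 := by
          rw [hg0, Polynomial.map_prod, Polynomial.eval_prod]
          refine Finset.prod_eq_zero hs ?_
          simp
        rw [hfr] at hv
        simp only [Polynomial.map_add, Polynomial.map_mul, Polynomial.eval_add,
          Polynomial.eval_mul, hg0eval, zero_mul, add_zero] at hv
        exact hv
      · calc (Polynomial.map (eval α') r).natDegree ≤ r.natDegree :=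
              Polynomial.natDegree_map_le
          _ < g0.natDegree :=
              Polynomial.natDegree_lt_natDegree hrz (Polynomial.degree_modByMonic_lt _ hg0monic)
          _ = (S 0).card := hg0deg
    -- each coefficient of r is in the smaller ideal
    have hcoeff : ∀ j : ℕ, r.coeff j ∈
        Ideal.span (Set.range fun i : Fin n =>
          ∏ s ∈ S i.succ, ((X i : MvPolynomial (Fin n) F) - C s)) := by
      intro j
      refine ih (fun i => S i.succ) _ fun α' hα' => ?_
      have := hr0 α' hα'
      have h2 : (Polynomial.map (eval α') r).coeff j = 0 := by rw [this]; simp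
      rwa [Polynomial.coeff_map] at h2
    -- φ.symm ∘ Polynomial.C is rename Fin.succ
    have hrename : ∀ p : MvPolynomial (Fin n) F,
        φ.symm (Polynomial.C p) = rename Fin.succ p := by
      intro p
      have : φ (rename Fin.succ p) = Polynomial.C p := by
        induction p using MvPolynomial.induction_on with
        | C a => simp [hφ, MvPolynomial.finSuccEquiv_apply]
        | add p1 p2 h1 h2 => simp [map_add, h1, h2]
        | mul_X p i h => rw [map_mul, map_mul, rename_X, h, MvPolynomial.finSuccEquiv_X_succ, ← Polynomial.C_mul]
      rw [← this, AlgEquiv.symm_apply_apply]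
    -- rename Fin.succ maps the smaller ideal into I
    have hrenmem : ∀ p : MvPolynomial (Fin n) F,
        p ∈ Ideal.span (Set.range fun i : Fin n =>
          ∏ s ∈ S i.succ, ((X i : MvPolynomial (Fin n) F) - C s)) →
        rename Fin.succ p ∈ I := by
      intro p hp
      have hmap : rename Fin.succ p ∈ Ideal.map (rename (R := F) Fin.succ).toRingHom
          (Ideal.span (Set.range fun i : Fin n =>
            ∏ s ∈ S i.succ, ((X i : MvPolynomial (Fin n) F) - C s))) :=
        Ideal.mem_map_of_mem _ hp
      rw [Ideal.map_span] at hmap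
      refine Ideal.span_le.mpr ?_ hmap
      rintro _ ⟨_, ⟨i, rfl⟩, rfl⟩
      refine Ideal.subset_span ⟨i.succ, ?_⟩
      simp only [AlgHom.toRingHom_eq_coe, RingHom.coe_coe, map_prod, map_sub, rename_X, rename_C]
    -- conclude
    have hfs : f = φ.symm r + φ.symm q * ∏ s ∈ S 0, ((X 0 : MvPolynomial (Fin (n + 1)) F) - C s) := by
      have := congrArg φ.symm hfr
      rw [AlgEquiv.symm_apply_apply] at this
      rw [this, map_add, map_mul, ← hφg0, AlgEquiv.symm_apply_apply, mul_comm]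
    rw [hfs]
    refine Ideal.add_mem _ ?_ (Ideal.mul_mem_left _ _ (Ideal.subset_span ⟨0, rfl⟩))
    -- φ.symm r ∈ I
    have hrsum : r = r.sum fun j a => Polynomial.C a * Polynomial.X ^ j :=
      (Polynomial.sum_C_mul_X_pow_eq r).symm
    rw [hrsum]
    rw [Polynomial.sum]
    rw [map_sum]
    refine Ideal.sum_mem _ fun j _ => ?_
    rw [map_mul, hrename]
    refine Ideal.mul_mem_right _ _ (hrenmem _ (hcoeff j))

theorem stmt_7 (F : Type*) [Field F] (n : ℕ) (S : Fin n → Finset F)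
    (hS : ∀ i, (S i).Nonempty) (f : MvPolynomial (Fin n) F) :
    f ∈ Ideal.span
        (Set.range fun i : Fin n => ∏ s ∈ S i, ((X i : MvPolynomial (Fin n) F) - C s)) ↔
      ∀ α : Fin n → F, (∀ i, α i ∈ S i) → eval α f = 0 := by
  constructor
  · intro hf α hα
    have hle : Ideal.span
        (Set.range fun i : Fin n => ∏ s ∈ S i, ((X i : MvPolynomial (Fin n) F) - C s)) ≤
        RingHom.ker (eval α) := by
      refine Ideal.span_le.mpr ?_
      rintro _ ⟨i, rfl⟩
      simp only [SetLike.mem_coe, RingHom.mem_ker, map_prod, map_sub, eval_X, eval_C]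
      exact Finset.prod_eq_zero (hα i) (sub_self _)
    exact hle hf
  · exact hard_dir F n S f
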